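/- arXiv:2006.07336 — 10 statements merged into one kernel-verified Lean document; each statement's English description precedes it below -/
import Mathlib

section
/- Let N ≥ 2 and u ≥ 2 be integers, let c ∈ [0, N], and set ε = 0 if c = 0 and ε = 1 if c > 0. Let A₁ ≤ A₂ ≤ ... ≤ A_u be natural numbers with A₁ = 0, A₂ = c, and A_{i+2} − A_i ≥ N for all 1 ≤ i ≤ u − 2. Then there exist two weakly increasing sequences of natural numbers B₁ ≤ ... ≤ B_u and C₁ ≤ ... ≤ C_u such that A_i = B_i + C_i for all i, B₁ = 0, B₂ = ε, B_{i+2} − B_i ≥ 1 for all 1 ≤ i ≤ u − 2, and C_{i+2} − C_i ≥ N − 1 for all 1 ≤ i ≤ u − 2. -/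
private lemma ceil_mul (N a : ℕ) (hN : 0 < N) : a ≤ N * ((a + (N - 1)) / N) := by
  have hdm := Nat.div_add_mod (a + (N - 1)) N
  have hmod := Nat.mod_lt (a + (N - 1)) hN
  omega

private lemma ceil_le_self (N a : ℕ) (hN : 0 < N) : (a + (N - 1)) / N ≤ a := by
  by_contra h
  push_neg at h
  have h1 : N * (a + 1) ≤ N * ((a + (N - 1)) / N) := Nat.mul_le_mul_left N h
  have h2 : a ≤ N * a := Nat.le_mul_of_pos_left a hN
  have h3 : N * (a + 1) = N * a + N := by ring
  have hdm := Nat.div_add_mod (a + (N - 1)) N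
  have hmod := Nat.mod_lt (a + (N - 1)) hN
  omega

private lemma ceil_subadd (N a d : ℕ) (hN : 0 < N) :
    (a + d + (N - 1)) / N ≤ (a + (N - 1)) / N + (d + (N - 1)) / N := by
  have ha := ceil_mul N a hN
  have hd := ceil_mul N d hN
  have hx : a + d + (N - 1) <
      ((a + (N - 1)) / N + (d + (N - 1)) / N + 1) * N := by
    have hexp : ((a + (N - 1)) / N + (d + (N - 1)) / N + 1) * N
        = N * ((a + (N - 1)) / N) + N * ((d + (N - 1)) / N) + N := by ring
    omega
  have := (Nat.div_lt_iff_lt_mul hN).mpr hx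
  omega

private lemma ceil_gap_bound (N d : ℕ) (hN : 2 ≤ N) (hd : N ≤ d) :
    (d + (N - 1)) / N + N ≤ d + 1 := by
  have hN0 : 0 < N := by omega
  rcases Nat.eq_or_lt_of_le hd with h | h
  · -- d = N
    have h1 : d + (N - 1) = (N - 1) + N := by omega
    rw [h1, Nat.add_div_right _ hN0, Nat.div_eq_of_lt (by omega)]
    omega
  · -- d ≥ N + 1
    have he : 1 ≤ d - N := by omega
    have hmul : d - N ≤ (d - N) * N := Nat.le_mul_of_pos_right _ hN0
    have hexp : (d - N + 2) * N = (d - N) * N + 2 * N := by ring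
    have hx : d + (N - 1) < (d - N + 2) * N := by omega
    have := (Nat.div_lt_iff_lt_mul hN0).mpr hx
    omega

theorem sequence_splitting (N u : ℕ) (hN : 2 ≤ N) (hu : 2 ≤ u)
    (c : ℕ) (hc : c ≤ N) (A : ℕ → ℕ)
    (hmono : ∀ i, 1 ≤ i → i < u → A i ≤ A (i + 1))
    (hA1 : A 1 = 0) (hA2 : A 2 = c)
    (hgap : ∀ i, 1 ≤ i → i + 2 ≤ u → A i + N ≤ A (i + 2)) :
    ∃ B C : ℕ → ℕ,
      (∀ i, 1 ≤ i → i < u → B i ≤ B (i + 1)) ∧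
      (∀ i, 1 ≤ i → i < u → C i ≤ C (i + 1)) ∧
      (∀ i, 1 ≤ i → i ≤ u → A i = B i + C i) ∧
      B 1 = 0 ∧ B 2 = (if c = 0 then 0 else 1) ∧
      (∀ i, 1 ≤ i → i + 2 ≤ u → B i + 1 ≤ B (i + 2)) ∧
      (∀ i, 1 ≤ i → i + 2 ≤ u → C i + (N - 1) ≤ C (i + 2)) := by
  have hN0 : 0 < N := by omega
  refine ⟨fun i => (A i + (N - 1)) / N, fun i => A i - (A i + (N - 1)) / N,
    ?_, ?_, ?_, ?_, ?_, ?_, ?_⟩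
  · -- B monotone
    intro i h1 h2
    exact Nat.div_le_div_right (by have := hmono i h1 h2; omega)
  · -- C monotone
    intro i h1 h2
    dsimp only
    have hab := hmono i h1 h2
    have hfa := ceil_le_self N (A i) hN0
    have hfb := ceil_le_self N (A (i + 1)) hN0
    have hsub := ceil_subadd N (A i) (A (i + 1) - A i) hN0
    have hd := ceil_le_self N (A (i + 1) - A i) hN0
    have heq : A i + (A (i + 1) - A i) = A (i + 1) := by omega
    rw [heq] at hsub
    omega
  · -- A = B + C
    intro i _ _
    dsimp only
    have := ceil_le_self N (A i) hN0
    omega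
  · -- B 1 = 0
    simp only [hA1]
    exact Nat.div_eq_of_lt (by omega)
  · -- B 2
    simp only [hA2]
    split_ifs with h
    · subst h
      exact Nat.div_eq_of_lt (by omega)
    · have h1 : 1 ≤ c := by omega
      have h2 : c + (N - 1) = (c - 1) + N := by omega
      rw [h2, Nat.add_div_right _ hN0, Nat.div_eq_of_lt (by omega)]
  · -- B gap
    intro i h1 h2
    have hg := hgap i h1 h2
    have heq : (A i + (N - 1)) / N + 1 = (A i + (N - 1) + N) / N :=
      (Nat.add_div_right _ hN0).symm
    rw [heq]
    exact Nat.div_le_div_right (by omega)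
  · -- C gap
    intro i h1 h2
    dsimp only
    have hg := hgap i h1 h2
    have hfa := ceil_le_self N (A i) hN0
    have hfb := ceil_le_self N (A (i + 2)) hN0
    have hsub := ceil_subadd N (A i) (A (i + 2) - A i) hN0
    have heq : A i + (A (i + 2) - A i) = A (i + 2) := by omega
    rw [heq] at hsub
    have hbound := ceil_gap_bound N (A (i + 2) - A i) hN (by omega)
    omega
end

section
/- Let (e, e') and (f, f') be pairs of natural numbers, and let λ be a bipartition of excess (e + f, e' + f'). Then there exist a bipartition μ of excess (e, e') and a bipartition ν of excess (f, f') such that λ = μ + ν (coordinate-wise), and moreover |μ| + |ν| = |λ|. -/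
/-- A bipartition: a sequence (indexed from 1; position 0 is unused and set to 0)
of naturals, eventually zero, with `λ₁ ≥ λ₃ ≥ λ₅ ≥ ⋯` and `λ₂ ≥ λ₄ ≥ λ₆ ≥ ⋯`. -/
def IsBipartition (l : ℕ → ℕ) : Prop :=
  l 0 = 0 ∧ (∀ i, 1 ≤ i → l (i + 2) ≤ l i) ∧ ∃ M, ∀ i, M ≤ i → l i = 0

/-- `λ` has excess `(e, e')`: `λ_i + e ≥ λ_{i+1}` for odd `i` and
`λ_i + e' ≥ λ_{i+1}` for even `i ≥ 2`. -/
def HasExcess (l : ℕ → ℕ) (e e' : ℕ) : Prop :=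
  ∀ i, 1 ≤ i → (Odd i → l (i + 1) ≤ l i + e) ∧ (Even i → l (i + 1) ≤ l i + e')

/-- `|λ| = n`. -/
def BSize (l : ℕ → ℕ) (n : ℕ) : Prop :=
  ∃ M, (∀ i, M ≤ i → l i = 0) ∧ (∑ i ∈ Finset.range M, l i) = n

namespace BipartDecompAux

variable (e e' f f' : ℕ)

/-- Period of the balanced-word function. -/
def P : ℕ := e + f + (e' + f')

/-- Indicator of positions where the balanced word increments. -/
def stp (x : ℕ) : ℕ :=
  if x % P e e' f f' < e' ∨ ((e' + f') ≤ x % P e e' f f' ∧ x % P e e' f f' < (e' + f') + e)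
  then 1 else 0

/-- Balanced-word function for odd positions. -/
def Fo (x : ℕ) : ℕ := ∑ t ∈ Finset.range x, stp e e' f f' t

/-- Balanced-word function for even positions. -/
def Fe (x : ℕ) : ℕ := Fo e e' f f' (x + (e' + f')) - e'

lemma stp_le_one (x : ℕ) : stp e e' f f' x ≤ 1 := by
  unfold stp; split_ifs <;> omega

lemma Fo_succ (x : ℕ) : Fo e e' f f' (x + 1) = Fo e e' f f' x + stp e e' f f' x :=
  Finset.sum_range_succ _ _

lemma Fo_zero : Fo e e' f f' 0 = 0 := rfl

lemma Fo_mono {x y : ℕ} (h : x ≤ y) : Fo e e' f f' x ≤ Fo e e' f f' y :=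
  Finset.sum_le_sum_of_subset (Finset.range_subset_range.mpr h)

lemma Fo_add_le (x k : ℕ) : Fo e e' f f' (x + k) ≤ Fo e e' f f' x + k := by
  induction k with
  | zero => simp
  | succ n ih =>
    have h1 : x + (n + 1) = (x + n) + 1 := rfl
    rw [h1, Fo_succ]
    have := stp_le_one e e' f f' (x + n)
    omega

lemma Fo_le_self (x : ℕ) : Fo e e' f f' x ≤ x := by
  have h := Fo_add_le e e' f f' 0 x
  simpa [Fo_zero] using h

lemma Fo_small {n : ℕ} (hn : n ≤ P e e' f f') :
    Fo e e' f f' n = min n e' + (min n ((e' + f') + e) - min n (e' + f')) := by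
  induction n with
  | zero => simpa using Fo_zero e e' f f'
  | succ k ih =>
    have hk : k < P e e' f f' := hn
    have ihk := ih (le_of_lt hk)
    have hmod : k % P e e' f f' = k := Nat.mod_eq_of_lt hk
    have hP : P e e' f f' = e + f + (e' + f') := rfl
    rw [Fo_succ, ihk]
    unfold stp
    rw [hmod]
    simp only [Nat.min_def]
    split_ifs <;> omega

lemma Fo_E' : Fo e e' f f' (e' + f') = e' := by
  have h : e' + f' ≤ P e e' f f' := by unfold P; omega
  rw [Fo_small e e' f f' h]
  have hP : P e e' f f' = e + f + (e' + f') := rfl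
  simp only [Nat.min_def]
  split_ifs <;> omega

lemma Fo_P : Fo e e' f f' (P e e' f f') = e + e' := by
  rw [Fo_small e e' f f' (le_refl _)]
  have hP : P e e' f f' = e + f + (e' + f') := rfl
  simp only [Nat.min_def]
  split_ifs <;> omega

lemma stp_period (x : ℕ) : stp e e' f f' (x + P e e' f f') = stp e e' f f' x := by
  unfold stp
  rw [Nat.add_mod_right]

lemma Fo_period (x : ℕ) : Fo e e' f f' (x + P e e' f f') = Fo e e' f f' x + (e + e') := by
  induction x with
  | zero => rw [Nat.zero_add, Fo_P, Fo_zero, Nat.zero_add]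
  | succ n ih =>
    have h1 : n + 1 + P e e' f f' = (n + P e e' f f') + 1 := by omega
    rw [h1, Fo_succ, stp_period, ih, Fo_succ]
    omega

lemma Fo_xE' (x : ℕ) : e' ≤ Fo e e' f f' (x + (e' + f')) := by
  have h := Fo_mono e e' f f' (show e' + f' ≤ x + (e' + f') by omega)
  rw [Fo_E'] at h
  exact h

lemma Fe_zero : Fe e e' f f' 0 = 0 := by
  unfold Fe
  rw [Nat.zero_add, Fo_E']
  omega

lemma Fe_mono {x y : ℕ} (h : x ≤ y) : Fe e e' f f' x ≤ Fe e e' f f' y := by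
  unfold Fe
  have := Fo_mono e e' f f' (show x + (e' + f') ≤ y + (e' + f') by omega)
  omega

lemma Fe_le_self (x : ℕ) : Fe e e' f f' x ≤ x := by
  unfold Fe
  have h : Fo e e' f f' (x + (e' + f')) ≤ Fo e e' f f' (e' + f') + x := by
    have := Fo_add_le e e' f f' (e' + f') x
    have h2 : e' + f' + x = x + (e' + f') := by omega
    rwa [h2] at this
  rw [Fo_E'] at h
  omega

lemma Fe_add_E (x : ℕ) : Fe e e' f f' (x + (e + f)) = Fo e e' f f' x + e := by
  unfold Fe
  have h : x + (e + f) + (e' + f') = x + P e e' f f' := by unfold P; omega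
  rw [h, Fo_period]
  omega

lemma Fo_add_E' (x : ℕ) : Fo e e' f f' (x + (e' + f')) = Fe e e' f f' x + e' := by
  unfold Fe
  have := Fo_xE' e e' f f' x
  omega

lemma Fo_sub_mono {x y : ℕ} (h : x ≤ y) : x - Fo e e' f f' x ≤ y - Fo e e' f f' y := by
  have h1 : Fo e e' f f' y ≤ Fo e e' f f' x + (y - x) := by
    have h2 := Fo_add_le e e' f f' x (y - x)
    have h3 : x + (y - x) = y := by omega
    rwa [h3] at h2
  have h4 := Fo_le_self e e' f f' x
  omega

lemma Fe_sub_mono {x y : ℕ} (h : x ≤ y) : x - Fe e e' f f' x ≤ y - Fe e e' f f' y := by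
  unfold Fe
  have h1 : Fo e e' f f' (y + (e' + f')) ≤ Fo e e' f f' (x + (e' + f')) + (y - x) := by
    have h2 := Fo_add_le e e' f f' (x + (e' + f')) (y - x)
    have h3 : x + (e' + f') + (y - x) = y + (e' + f') := by omega
    rwa [h3] at h2
  have h4 := Fo_xE' e e' f f' x
  have h5 := Fo_xE' e e' f f' y
  have h6 : Fo e e' f f' (x + (e' + f')) ≤ x + (e' + f') := Fo_le_self e e' f f' _
  omega

end BipartDecompAux

open BipartDecompAux in
theorem bipartition_excess_decompose (e e' f f' : ℕ) (l : ℕ → ℕ)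
    (hl : IsBipartition l) (hle : HasExcess l (e + f) (e' + f')) :
    ∃ μ ν : ℕ → ℕ,
      IsBipartition μ ∧ HasExcess μ e e' ∧
      IsBipartition ν ∧ HasExcess ν f f' ∧
      (∀ i, l i = μ i + ν i) ∧
      ∃ a b : ℕ, BSize μ a ∧ BSize ν b ∧ BSize l (a + b) := by
  classical
  obtain ⟨hl0, hlmono, M, hM⟩ := hl
  set μ : ℕ → ℕ := fun i => if i % 2 = 1 then Fo e e' f f' (l i) else Fe e e' f f' (l i)
    with hμdef
  set ν : ℕ → ℕ := fun i => l i - μ i with hνdef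
  have hμle : ∀ i, μ i ≤ l i := by
    intro i
    by_cases h : i % 2 = 1
    · simp only [hμdef, if_pos h]
      exact Fo_le_self e e' f f' (l i)
    · simp only [hμdef, if_neg h]
      exact Fe_le_self e e' f f' (l i)
  have hsum : ∀ i, l i = μ i + ν i := by
    intro i
    have := hμle i
    simp only [hνdef]
    omega
  have hμzero : ∀ i, l i = 0 → μ i = 0 := by
    intro i hi
    by_cases h : i % 2 = 1 <;> simp only [hμdef]
    · simp only [if_pos h, hi, Fo_zero]
    · simp only [if_neg h, hi, Fe_zero]
  refine ⟨μ, ν, ?_, ?_, ?_, ?_, hsum, ?_⟩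
  · -- IsBipartition μ
    refine ⟨?_, ?_, M, fun i hi => hμzero i (hM i hi)⟩
    · have h0 : (0 : ℕ) % 2 ≠ 1 := by omega
      simp only [hμdef, if_neg h0, hl0, Fe_zero]
    · intro i hi
      have hmono := hlmono i hi
      have hpar : (i + 2) % 2 = i % 2 := by omega
      by_cases h : i % 2 = 1
      · have h2 : (i + 2) % 2 = 1 := by omega
        simp only [hμdef, if_pos h, if_pos h2]
        exact Fo_mono e e' f f' hmono
      · have h2 : ¬ (i + 2) % 2 = 1 := by omega
        simp only [hμdef, if_neg h, if_neg h2]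
        exact Fe_mono e e' f f' hmono
  · -- HasExcess μ e e'
    intro i hi
    constructor
    · intro hodd
      rw [Nat.odd_iff] at hodd
      have h2 : ¬ (i + 1) % 2 = 1 := by omega
      have hexc := ((hle i hi).1 (Nat.odd_iff.mpr hodd))
      simp only [hμdef, if_pos hodd, if_neg h2]
      calc Fe e e' f f' (l (i + 1)) ≤ Fe e e' f f' (l i + (e + f)) := Fe_mono e e' f f' hexc
        _ = Fo e e' f f' (l i) + e := Fe_add_E e e' f f' (l i)
    · intro heven
      rw [Nat.even_iff] at heven
      have h1 : ¬ i % 2 = 1 := by omega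
      have h2 : (i + 1) % 2 = 1 := by omega
      have hexc := ((hle i hi).2 (Nat.even_iff.mpr heven))
      simp only [hμdef, if_neg h1, if_pos h2]
      calc Fo e e' f f' (l (i + 1)) ≤ Fo e e' f f' (l i + (e' + f')) := Fo_mono e e' f f' hexc
        _ = Fe e e' f f' (l i) + e' := Fo_add_E' e e' f f' (l i)
  · -- IsBipartition ν
    refine ⟨?_, ?_, M, ?_⟩
    · simp only [hνdef, hl0]
      omega
    · intro i hi
      have hmono := hlmono i hi
      by_cases h : i % 2 = 1
      · have h2 : (i + 2) % 2 = 1 := by omega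
        simp only [hνdef, hμdef, if_pos h, if_pos h2]
        exact Fo_sub_mono e e' f f' hmono
      · have h2 : ¬ (i + 2) % 2 = 1 := by omega
        simp only [hνdef, hμdef, if_neg h, if_neg h2]
        exact Fe_sub_mono e e' f f' hmono
    · intro i hi
      have hz := hM i hi
      simp only [hνdef, hz]
      omega
  · -- HasExcess ν f f'
    intro i hi
    constructor
    · intro hodd
      rw [Nat.odd_iff] at hodd
      have h2 : ¬ (i + 1) % 2 = 1 := by omega
      have hexc := ((hle i hi).1 (Nat.odd_iff.mpr hodd))
      simp only [hνdef, hμdef, if_pos hodd, if_neg h2]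
      have step1 : l (i + 1) - Fe e e' f f' (l (i + 1))
          ≤ (l i + (e + f)) - Fe e e' f f' (l i + (e + f)) :=
        Fe_sub_mono e e' f f' hexc
      have step2 : Fe e e' f f' (l i + (e + f)) = Fo e e' f f' (l i) + e :=
        Fe_add_E e e' f f' (l i)
      have step3 : Fo e e' f f' (l i) ≤ l i := Fo_le_self e e' f f' (l i)
      omega
    · intro heven
      rw [Nat.even_iff] at heven
      have h1 : ¬ i % 2 = 1 := by omega
      have h2 : (i + 1) % 2 = 1 := by omega
      have hexc := ((hle i hi).2 (Nat.even_iff.mpr heven))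
      simp only [hνdef, hμdef, if_neg h1, if_pos h2]
      have step1 : l (i + 1) - Fo e e' f f' (l (i + 1))
          ≤ (l i + (e' + f')) - Fo e e' f f' (l i + (e' + f')) :=
        Fo_sub_mono e e' f f' hexc
      have step2 : Fo e e' f f' (l i + (e' + f')) = Fe e e' f f' (l i) + e' :=
        Fo_add_E' e e' f f' (l i)
      have step3 : Fe e e' f f' (l i) ≤ l i := Fe_le_self e e' f f' (l i)
      omega
  · -- sizes
    refine ⟨∑ i ∈ Finset.range M, μ i, ∑ i ∈ Finset.range M, ν i,
      ⟨M, fun i hi => hμzero i (hM i hi), rfl⟩,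
      ⟨M, fun i hi => by simp only [hνdef, hM i hi]; omega, rfl⟩,
      ⟨M, hM, ?_⟩⟩
    rw [← Finset.sum_add_distrib]
    exact Finset.sum_congr rfl (fun i _ => hsum i)
end

section
/- Coordinate-wise addition defines a surjective map BP_{1,0} × BP_{0,1} → BP_{1,1}, i.e. every bipartition of excess (1,1) is a sum of a bipartition of excess (1,0) and a bipartition of excess (0,1). -/
theorem excess_one_one_decompose (l : ℕ → ℕ)
    (hl : IsBipartition l) (hle : HasExcess l 1 1) :
    ∃ μ ν : ℕ → ℕ,
      IsBipartition μ ∧ HasExcess μ 1 0 ∧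
      IsBipartition ν ∧ HasExcess ν 0 1 ∧
      ∀ i, l i = μ i + ν i := by
  obtain ⟨h0, hmono, M, hM⟩ := hl
  have hstep : ∀ i, 1 ≤ i → l (i + 1) ≤ l i + 1 := by
    intro i hi
    rcases Nat.even_or_odd i with h | h
    · exact (hle i hi).2 h
    · exact (hle i hi).1 h
  refine ⟨fun i => if Odd i then l i / 2 else (l i + 1) / 2,
          fun i => if Odd i then (l i + 1) / 2 else l i / 2, ?_, ?_, ?_, ?_, ?_⟩
  · refine ⟨by simp [h0], fun i hi => ?_, M, fun i hi => ?_⟩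
    · have h2 : Odd (i + 2) ↔ Odd i := by simp [Nat.odd_add]
      have := hmono i hi
      by_cases h : Odd i
      · simp only [h, h2.mpr h, if_pos]; omega
      · simp only [if_neg h, if_neg (h2.not.mpr h)]; omega
    · have := hM i hi
      by_cases h : Odd i <;> simp [h, this]
  · intro i hi
    have hodd1 : Odd (i + 1) ↔ ¬ Odd i := by simp [Nat.odd_add]
    have := hstep i hi
    constructor
    · intro h
      simp only [if_pos h, if_neg (fun hh => (hodd1.mp hh) h)]
      omega
    · intro h
      have h' : ¬ Odd i := by simpa using h
      simp only [if_neg h', if_pos (hodd1.mpr h')]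
      omega
  · refine ⟨by simp [h0], fun i hi => ?_, M, fun i hi => ?_⟩
    · have h2 : Odd (i + 2) ↔ Odd i := by simp [Nat.odd_add]
      have := hmono i hi
      by_cases h : Odd i
      · simp only [h, h2.mpr h, if_pos]; omega
      · simp only [if_neg h, if_neg (h2.not.mpr h)]; omega
    · have := hM i hi
      by_cases h : Odd i <;> simp [h, this]
  · intro i hi
    have hodd1 : Odd (i + 1) ↔ ¬ Odd i := by simp [Nat.odd_add]
    have := hstep i hi
    constructor
    · intro h
      simp only [if_pos h, if_neg (fun hh => (hodd1.mp hh) h)]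
      omega
    · intro h
      have h' : ¬ Odd i := by simpa using h
      simp only [if_neg h', if_pos (hodd1.mpr h')]
      omega
  · intro i
    by_cases h : Odd i <;> simp [h] <;> omega
end

section
/- Every bipartition of excess (2,0) is the coordinate-wise sum of two bipartitions each of excess (1,0). -/
theorem excess_two_zero_decompose (l : ℕ → ℕ)
    (hl : IsBipartition l) (hle : HasExcess l 2 0) :
    ∃ μ ν : ℕ → ℕ,
      IsBipartition μ ∧ HasExcess μ 1 0 ∧
      IsBipartition ν ∧ HasExcess ν 1 0 ∧
      ∀ i, l i = μ i + ν i := by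
  obtain ⟨h0, hmono, M, hM⟩ := hl
  refine ⟨fun i => (l i + 1) / 2, fun i => l i / 2, ?_, ?_, ?_, ?_, fun i => by beta_reduce; omega⟩
  · exact ⟨by beta_reduce; omega, fun i hi => by have := hmono i hi; beta_reduce; omega,
      M, fun i hi => by have := hM i hi; beta_reduce; omega⟩
  · intro i hi
    obtain ⟨ho, he⟩ := hle i hi
    constructor
    · intro h; have := ho h; beta_reduce; omega
    · intro h; have := he h; beta_reduce; omega
  · exact ⟨by beta_reduce; omega, fun i hi => by have := hmono i hi; beta_reduce; omega,
      M, fun i hi => by have := hM i hi; beta_reduce; omega⟩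
  · intro i hi
    obtain ⟨ho, he⟩ := hle i hi
    constructor
    · intro h; have := ho h; beta_reduce; omega
    · intro h; have := he h; beta_reduce; omega
end

section
/- Every bipartition of excess (2,2) is the coordinate-wise sum of a bipartition of excess (2,0) and a bipartition of excess (0,2). -/
theorem key_decompose : ∀ M : ℕ, ∀ l : ℕ → ℕ, l 0 = 0 →
    (∀ i, 1 ≤ i → l (i + 2) ≤ l i) →
    (∀ i, 1 ≤ i → l (i + 1) ≤ l i + 2) →
    (∀ i, M ≤ i → l i = 0) →
    ∃ μ ν : ℕ → ℕ,
      IsBipartition μ ∧ HasExcess μ 2 0 ∧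
      IsBipartition ν ∧ HasExcess ν 0 2 ∧
      (∀ i, l i = μ i + ν i) ∧
      max (μ 1) (μ 2) + max (ν 1 - 2) (ν 2) ≤ max (l 1 - 2) (l 2) := by
  intro M
  induction M with
  | zero =>
    intro l hl0 _ _ hz
    refine ⟨fun _ => 0, fun _ => 0,
      ⟨rfl, fun _ _ => Nat.le_refl 0, 0, fun _ _ => rfl⟩,
      fun i _ => ⟨fun _ => Nat.zero_le _, fun _ => Nat.zero_le _⟩,
      ⟨rfl, fun _ _ => Nat.le_refl 0, 0, fun _ _ => rfl⟩,
      fun i _ => ⟨fun _ => Nat.zero_le _, fun _ => Nat.zero_le _⟩,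
      fun i => by simp [hz i (Nat.zero_le i)],
      by simp⟩
  | succ M ih =>
    intro l hl0 hbp hexc hz
    set l' : ℕ → ℕ := fun i => if i = 0 then 0 else l (i + 1) with hl'def
    have hl'eq : ∀ i, 1 ≤ i → l' i = l (i + 1) := by
      intro i hi
      simp only [hl'def]
      rw [if_neg (by omega)]
    have hl'0 : l' 0 = 0 := rfl
    have hbp' : ∀ i, 1 ≤ i → l' (i + 2) ≤ l' i := by
      intro i hi
      rw [hl'eq (i + 2) (by omega), hl'eq i hi]
      rw [show i + 2 + 1 = (i + 1) + 2 by omega]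
      exact hbp (i + 1) (by omega)
    have hexc' : ∀ i, 1 ≤ i → l' (i + 1) ≤ l' i + 2 := by
      intro i hi
      rw [hl'eq (i + 1) (by omega), hl'eq i hi]
      rw [show i + 1 + 1 = (i + 1) + 1 by omega]
      exact hexc (i + 1) (by omega)
    have hz' : ∀ i, M ≤ i → l' i = 0 := by
      intro i hi
      rcases Nat.eq_zero_or_pos i with h | h
      · subst h; rfl
      · rw [hl'eq i h]; exact hz (i + 1) (by omega)
    obtain ⟨μ', ν', hμ'bp, hμ'e, hν'bp, hν'e, hsum', hinv'⟩ := ih l' hl'0 hbp' hexc' hz'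
    -- basic numeric facts
    have e2 : μ' 2 ≤ μ' 1 + 2 := by
      have h := (hμ'e 1 (Nat.le_refl 1)).1 odd_one
      rwa [show (1 : ℕ) + 1 = 2 by norm_num] at h
    have e3 : ν' 2 ≤ ν' 1 := by
      have h := (hν'e 1 (Nat.le_refl 1)).1 odd_one
      rw [show (1 : ℕ) + 1 = 2 by norm_num] at h
      omega
    have s1 : l 2 = μ' 1 + ν' 1 := by
      have h := hsum' 1
      rw [hl'eq 1 (Nat.le_refl 1)] at h
      rwa [show (1 : ℕ) + 1 = 2 by norm_num] at h
    have s2 : l 3 = μ' 2 + ν' 2 := by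
      have h := hsum' 2
      rw [hl'eq 2 (by norm_num)] at h
      rwa [show (2 : ℕ) + 1 = 3 by norm_num] at h
    have h2 : l 2 ≤ l 1 + 2 := by
      have h := hexc 1 (Nat.le_refl 1)
      rwa [show (1 : ℕ) + 1 = 2 by norm_num] at h
    have h3 : l 3 ≤ l 1 := by
      have h := hbp 1 (Nat.le_refl 1)
      rwa [show (1 : ℕ) + 2 = 3 by norm_num] at h
    have hinv : max (μ' 1) (μ' 2) + max (ν' 1 - 2) (ν' 2) ≤ max (l 2 - 2) (l 3) := by
      rw [hl'eq 1 (Nat.le_refl 1), hl'eq 2 (by norm_num)] at hinv'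
      rwa [show (1 : ℕ) + 1 = 2 by norm_num, show (2 : ℕ) + 1 = 3 by norm_num] at hinv'
    set a : ℕ := max (max (μ' 1) (μ' 2)) (l 1 - ν' 1) with ha
    set b : ℕ := l 1 - a with hb
    have f1 : b + a = l 1 := by omega
    have f2 : μ' 1 ≤ a := by omega
    have f3 : μ' 2 ≤ a := by omega
    have f4 : ν' 1 ≤ b + 2 := by omega
    have f5 : ν' 2 ≤ b := by omega
    have f6 : max b (ν' 1) + max (a - 2) (μ' 1) ≤ max (l 1 - 2) (l 2) := by omega
    set μ : ℕ → ℕ := fun i => if i = 0 then 0 else if i = 1 then b else ν' (i - 1) with hμd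
    set ν : ℕ → ℕ := fun i => if i = 0 then 0 else if i = 1 then a else μ' (i - 1) with hνd
    have μ0 : μ 0 = 0 := rfl
    have μ1 : μ 1 = b := rfl
    have ν0 : ν 0 = 0 := rfl
    have ν1 : ν 1 = a := rfl
    have μs : ∀ j, μ (j + 2) = ν' (j + 1) := by
      intro j
      simp only [hμd]
      rw [if_neg (by omega), if_neg (by omega), show j + 2 - 1 = j + 1 by omega]
    have νs : ∀ j, ν (j + 2) = μ' (j + 1) := by
      intro j
      simp only [hνd]
      rw [if_neg (by omega), if_neg (by omega), show j + 2 - 1 = j + 1 by omega]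
    have μ2 : μ 2 = ν' 1 := by
      have h := μs 0
      rwa [show (0 : ℕ) + 2 = 2 by norm_num, show (0 : ℕ) + 1 = 1 by norm_num] at h
    have ν2 : ν 2 = μ' 1 := by
      have h := νs 0
      rwa [show (0 : ℕ) + 2 = 2 by norm_num, show (0 : ℕ) + 1 = 1 by norm_num] at h
    have μ3 : μ 3 = ν' 2 := by
      have h := μs 1
      rwa [show (1 : ℕ) + 2 = 3 by norm_num, show (1 : ℕ) + 1 = 2 by norm_num] at h
    have ν3 : ν 3 = μ' 2 := by
      have h := νs 1
      rwa [show (1 : ℕ) + 2 = 3 by norm_num, show (1 : ℕ) + 1 = 2 by norm_num] at h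
    -- parity helpers
    have oddEven : ∀ j : ℕ, Odd (j + 2) → Even (j + 1) := by
      intro j ⟨k, hk⟩; exact ⟨k, by omega⟩
    have evenOdd : ∀ j : ℕ, Even (j + 2) → Odd (j + 1) := by
      intro j ⟨k, hk⟩; exact ⟨k - 1, by omega⟩
    refine ⟨μ, ν, ?_, ?_, ?_, ?_, ?_, ?_⟩
    · refine ⟨μ0, ?_, ?_⟩
      · intro i hi
        match i, hi with
        | 1, _ =>
          rw [show (1 : ℕ) + 2 = 3 by norm_num, μ3, μ1]
          exact f5
        | (j + 2), _ =>
          rw [μs j, μs (j + 2)]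
          rw [show j + 2 + 1 = (j + 1) + 2 by omega]
          exact hν'bp.2.1 (j + 1) (by omega)
      · obtain ⟨Mν, hMν⟩ := hν'bp.2.2
        refine ⟨Mν + 2, ?_⟩
        intro i hi
        obtain ⟨j, rfl⟩ : ∃ j, i = j + 2 := ⟨i - 2, by omega⟩
        rw [μs j]
        exact hMν (j + 1) (by omega)
    · intro i hi
      match i, hi with
      | 1, _ =>
        constructor
        · intro _
          rw [show (1 : ℕ) + 1 = 2 by norm_num, μ2, μ1]
          exact f4
        · intro h
          exact absurd h (by decide)
      | (j + 2), _ =>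
        constructor
        · intro hodd
          rw [μs j, show j + 2 + 1 = (j + 1) + 2 by omega, μs (j + 1)]
          exact (hν'e (j + 1) (by omega)).2 (oddEven j hodd)
        · intro heven
          rw [μs j, show j + 2 + 1 = (j + 1) + 2 by omega, μs (j + 1)]
          exact (hν'e (j + 1) (by omega)).1 (evenOdd j heven)
    · refine ⟨ν0, ?_, ?_⟩
      · intro i hi
        match i, hi with
        | 1, _ =>
          rw [show (1 : ℕ) + 2 = 3 by norm_num, ν3, ν1]
          exact f3
        | (j + 2), _ =>
          rw [νs j, νs (j + 2)]
          rw [show j + 2 + 1 = (j + 1) + 2 by omega]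
          exact hμ'bp.2.1 (j + 1) (by omega)
      · obtain ⟨Mμ, hMμ⟩ := hμ'bp.2.2
        refine ⟨Mμ + 2, ?_⟩
        intro i hi
        obtain ⟨j, rfl⟩ : ∃ j, i = j + 2 := ⟨i - 2, by omega⟩
        rw [νs j]
        exact hMμ (j + 1) (by omega)
    · intro i hi
      match i, hi with
      | 1, _ =>
        constructor
        · intro _
          rw [show (1 : ℕ) + 1 = 2 by norm_num, ν2, ν1]
          omega
        · intro h
          exact absurd h (by decide)
      | (j + 2), _ =>
        constructor
        · intro hodd
          rw [νs j, show j + 2 + 1 = (j + 1) + 2 by omega, νs (j + 1)]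
          exact (hμ'e (j + 1) (by omega)).2 (oddEven j hodd)
        · intro heven
          rw [νs j, show j + 2 + 1 = (j + 1) + 2 by omega, νs (j + 1)]
          exact (hμ'e (j + 1) (by omega)).1 (evenOdd j heven)
    · intro i
      match i with
      | 0 => rw [μ0, ν0, hl0]
      | 1 => rw [μ1, ν1]; omega
      | (j + 2) =>
        rw [μs j, νs j]
        have h := hsum' (j + 1)
        rw [hl'eq (j + 1) (by omega), show j + 1 + 1 = j + 2 by omega] at h
        omega
    · rw [μ1, μ2, ν1, ν2]
      exact f6

theorem excess_two_two_decompose (l : ℕ → ℕ)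
    (hl : IsBipartition l) (hle : HasExcess l 2 2) :
    ∃ μ ν : ℕ → ℕ,
      IsBipartition μ ∧ HasExcess μ 2 0 ∧
      IsBipartition ν ∧ HasExcess ν 0 2 ∧
      ∀ i, l i = μ i + ν i := by
  obtain ⟨hl0, hbp, M, hM⟩ := hl
  have hexc2 : ∀ i, 1 ≤ i → l (i + 1) ≤ l i + 2 := by
    intro i hi
    rcases Nat.even_or_odd i with h | h
    · exact (hle i hi).2 h
    · exact (hle i hi).1 h
  obtain ⟨μ, ν, h1, h2, h3, h4, h5, _⟩ := key_decompose M l hl0 hbp hexc2 hM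
  exact ⟨μ, ν, h1, h2, h3, h4, h5⟩
end

section
/- Every bipartition of excess (0,4) is the coordinate-wise sum of two bipartitions each of excess (0,2). -/
theorem excess_zero_four_decompose (l : ℕ → ℕ)
    (hl : IsBipartition l) (hle : HasExcess l 0 4) :
    ∃ μ ν : ℕ → ℕ,
      IsBipartition μ ∧ HasExcess μ 0 2 ∧
      IsBipartition ν ∧ HasExcess ν 0 2 ∧
      ∀ i, l i = μ i + ν i := by
  obtain ⟨h0, hmono, M, hM⟩ := hl
  refine ⟨fun i => (l i + 1) / 2, fun i => l i / 2, ?_, ?_, ?_, ?_, ?_⟩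
  · exact ⟨by dsimp only; omega, fun i hi => by dsimp only; have := hmono i hi; omega,
      M, fun i hi => by dsimp only; have := hM i hi; omega⟩
  · intro i hi
    obtain ⟨h1, h2⟩ := hle i hi
    exact ⟨fun ho => by dsimp only; have := h1 ho; omega, fun he => by dsimp only; have := h2 he; omega⟩
  · exact ⟨by dsimp only; omega, fun i hi => by dsimp only; have := hmono i hi; omega,
      M, fun i hi => by dsimp only; have := hM i hi; omega⟩
  · intro i hi
    obtain ⟨h1, h2⟩ := hle i hi
    exact ⟨fun ho => by dsimp only; have := h1 ho; omega, fun he => by dsimp only; have := h2 he; omega⟩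
  · intro i; dsimp only; omega
end

section
/- Fix (e, e') ∈ ℕ × ℕ, n ∈ ℕ, and m large enough that λ_{2m} = λ_{2m+1} = 0 for all λ ∈ BP^n_{e,e'}. The map κ sending λ = (λ₁, λ₂, λ₃, ...) to Λ = (Λ₁, ..., Λ_{2m+1}) with Λ_{2k+1} = λ_{2k+1} + (m−k)(e+e') for 0 ≤ k ≤ m and Λ_{2k} = λ_{2k} + (m−k)e + (m−k+1)e' for 1 ≤ k ≤ m is an injection from BP^n_{e,e'} into the set of sequences Λ₁ ≥ Λ₂ ≥ ... ≥ Λ_{2m+1} of naturals with Λ_i − Λ_{i+2} ≥ e + e' for 1 ≤ i ≤ 2m − 1, Λ_{2m} = e', and Λ_{2m+1} = 0. -/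
/-- The map κ of 2.2: Λ_{2k+1} = λ_{2k+1} + (m−k)(e+e'),
Λ_{2k} = λ_{2k} + (m−k)e + (m−k+1)e'. -/
def kappaMap (e e' m : ℕ) (l : ℕ → ℕ) : ℕ → ℕ := fun i =>
  if i % 2 = 1 then l i + ((2 * m + 1 - i) / 2) * (e + e')
  else l i + ((2 * m - i) / 2) * e + ((2 * m - i) / 2 + 1) * e'
lemma kappa_odd (e e' m k : ℕ) (l : ℕ → ℕ) (hk : k ≤ m) :
    kappaMap e e' m l (2 * k + 1) = l (2 * k + 1) + (m - k) * (e + e') := by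
  unfold kappaMap
  have h1 : (2 * k + 1) % 2 = 1 := by omega
  rw [if_pos h1]
  have h2 : (2 * m + 1 - (2 * k + 1)) / 2 = m - k := by omega
  rw [h2]

lemma kappa_even (e e' m k : ℕ) (l : ℕ → ℕ) (hk : k ≤ m) :
    kappaMap e e' m l (2 * k) = l (2 * k) + (m - k) * e + (m - k + 1) * e' := by
  unfold kappaMap
  have h1 : ¬ (2 * k) % 2 = 1 := by omega
  rw [if_neg h1]
  have h2 : (2 * m - 2 * k) / 2 = m - k := by omega
  rw [h2]

lemma zero_tail (l : ℕ → ℕ) (hdec : ∀ i, 1 ≤ i → l (i + 2) ≤ l i) (m : ℕ)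
    (hm : 1 ≤ m) (h1 : l (2 * m) = 0) (h2 : l (2 * m + 1) = 0) :
    ∀ i, 2 * m ≤ i → l i = 0 := by
  intro i
  induction i using Nat.strong_induction_on with
  | _ i ih =>
    intro hi
    rcases Nat.lt_or_ge i (2 * m + 2) with h | h
    · have : i = 2 * m ∨ i = 2 * m + 1 := by omega
      rcases this with rfl | rfl
      · exact h1
      · exact h2
    · obtain ⟨j, rfl⟩ : ∃ j, i = j + 2 := ⟨i - 2, by omega⟩
      have := hdec j (by omega)
      have := ih j (by omega) (by omega)
      omega

theorem kappa_injection (e e' n m : ℕ) (hm : 1 ≤ m)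
    (hlarge : ∀ l : ℕ → ℕ, IsBipartition l → HasExcess l e e' → BSize l n →
      l (2 * m) = 0 ∧ l (2 * m + 1) = 0) :
    (∀ l : ℕ → ℕ, IsBipartition l → HasExcess l e e' → BSize l n →
      (∀ i, 1 ≤ i → i ≤ 2 * m → kappaMap e e' m l (i + 1) ≤ kappaMap e e' m l i) ∧
      (∀ i, 1 ≤ i → i ≤ 2 * m - 1 →
        kappaMap e e' m l (i + 2) + (e + e') ≤ kappaMap e e' m l i) ∧
      kappaMap e e' m l (2 * m) = e' ∧ kappaMap e e' m l (2 * m + 1) = 0) ∧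
    (∀ l l' : ℕ → ℕ,
      IsBipartition l → HasExcess l e e' → BSize l n →
      IsBipartition l' → HasExcess l' e e' → BSize l' n →
      (∀ i, 1 ≤ i → i ≤ 2 * m + 1 → kappaMap e e' m l i = kappaMap e e' m l' i) →
      l = l') := by
  constructor
  · intro l hbp hexc hsz
    obtain ⟨h2m, h2m1⟩ := hlarge l hbp hexc hsz
    refine ⟨?_, ?_, ?_, ?_⟩
    · intro i hi1 hi2
      rcases Nat.even_or_odd i with he | ho
      · -- i = 2k, k ≥ 1, k ≤ m
        obtain ⟨k, rfl⟩ : ∃ k, i = 2 * k := by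
          obtain ⟨k, hk⟩ := he; exact ⟨k, by omega⟩
        have hk : k ≤ m := by omega
        have hx := (hexc (2 * k) hi1).2 (by exact ⟨k, by ring⟩)
        rw [kappa_even e e' m k l hk]
        have : (2 : ℕ) * k + 1 = 2 * k + 1 := rfl
        rw [show kappaMap e e' m l (2 * k + 1) =
            l (2 * k + 1) + (m - k) * (e + e') from kappa_odd e e' m k l hk]
        have hmk : (m - k) * (e + e') = (m - k) * e + (m - k) * e' := by ring
        have hmk2 : (m - k + 1) * e' = (m - k) * e' + e' := by ring
        omega
      · obtain ⟨k, rfl⟩ : ∃ k, i = 2 * k + 1 := by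
          obtain ⟨k, hk⟩ := ho; exact ⟨k, by omega⟩
        have hk : k ≤ m := by omega
        have hk' : k < m := by omega
        have hx := (hexc (2 * k + 1) hi1).1 ⟨k, by ring⟩
        rw [kappa_odd e e' m k l hk]
        rw [show (2 * k + 1 + 1) = 2 * (k + 1) from by ring,
          kappa_even e e' m (k + 1) l (by omega)]
        obtain ⟨b, hb⟩ : ∃ b, m - k = b + 1 := ⟨m - k - 1, by omega⟩
        have hb2 : m - (k + 1) = b := by omega
        rw [hb, hb2]
        have hx' : l (2 * (k + 1)) ≤ l (2 * k + 1) + e := by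
          rw [show 2 * (k + 1) = 2 * k + 1 + 1 from by ring]; exact hx
        have h1 : (b + 1) * (e + e') = b * e + (b + 1) * e' + e := by ring
        omega
    · intro i hi1 hi2
      have hdec := hbp.2.1 i hi1
      rcases Nat.even_or_odd i with he | ho
      · obtain ⟨k, rfl⟩ : ∃ k, i = 2 * k := by
          obtain ⟨k, hk⟩ := he; exact ⟨k, by omega⟩
        have hk : k ≤ m := by omega
        rw [kappa_even e e' m k l hk,
          show (2 * k + 2) = 2 * (k + 1) from by ring,
          kappa_even e e' m (k + 1) l (by omega)]
        obtain ⟨b, hb⟩ : ∃ b, m - k = b + 1 := ⟨m - k - 1, by omega⟩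
        have hb2 : m - (k + 1) = b := by omega
        rw [hb, hb2]
        have hd' : l (2 * (k + 1)) ≤ l (2 * k) := by
          rw [show 2 * (k + 1) = 2 * k + 2 from by ring]; exact hdec
        have h1 : (b + 1) * e = b * e + e := by ring
        have h2 : (b + 1 + 1) * e' = (b + 1) * e' + e' := by ring
        omega
      · obtain ⟨k, rfl⟩ : ∃ k, i = 2 * k + 1 := by
          obtain ⟨k, hk⟩ := ho; exact ⟨k, by omega⟩
        have hk : k ≤ m := by omega
        rw [kappa_odd e e' m k l hk,
          show (2 * k + 1 + 2) = 2 * (k + 1) + 1 from by ring,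
          kappa_odd e e' m (k + 1) l (by omega)]
        obtain ⟨b, hb⟩ : ∃ b, m - k = b + 1 := ⟨m - k - 1, by omega⟩
        have hb2 : m - (k + 1) = b := by omega
        rw [hb, hb2]
        have hd' : l (2 * (k + 1) + 1) ≤ l (2 * k + 1) := by
          rw [show 2 * (k + 1) + 1 = 2 * k + 1 + 2 from by ring]; exact hdec
        have h1 : (b + 1) * (e + e') = b * (e + e') + (e + e') := by ring
        omega
    · rw [show (2 * m) = 2 * m from rfl, kappa_even e e' m m l le_rfl]
      simp [h2m]
    · rw [kappa_odd e e' m m l le_rfl]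
      simp [h2m1]
  · intro l l' hbp hexc hsz hbp' hexc' hsz' heq
    obtain ⟨ha, hb⟩ := hlarge l hbp hexc hsz
    obtain ⟨ha', hb'⟩ := hlarge l' hbp' hexc' hsz'
    funext i
    rcases Nat.eq_zero_or_pos i with rfl | hi
    · rw [hbp.1, hbp'.1]
    rcases Nat.lt_or_ge (2 * m + 1) i with h | h
    · rw [zero_tail l hbp.2.1 m hm ha hb i (by omega),
        zero_tail l' hbp'.2.1 m hm ha' hb' i (by omega)]
    · have := heq i hi h
      unfold kappaMap at this
      rcases Nat.decEq (i % 2) 1 with hpar | hpar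
      · rw [if_neg hpar, if_neg hpar] at this; omega
      · rw [if_pos hpar, if_pos hpar] at this; omega
end

section
/- For any (f, f') ∈ ℕ × ℕ and any Λ = (Λ₁, ..., Λ_{2m+1}) ∈ ᵐB̂P_{f,f'}, there exist Λ¹, ..., Λ^f in ᵐB̂P_{1,0}, Λ'¹, ..., Λ'^{f'} in ᵐB̂P_{0,1}, and Λ̃⁰ ∈ ᵐB̂P_{0,0} such that Λ = Λ¹ + ⋯ + Λ^f + Λ'¹ + ⋯ + Λ'^{f'} + Λ̃⁰, where addition is coordinate-wise. -/
/-- The set ᵐB̂P_{e,e'}: sequences Λ₁ ≥ Λ₂ ≥ ⋯ ≥ Λ_{2m+1} of naturals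
(indexed from 1) with Λ_i − Λ_{i+2} ≥ e + e' for 1 ≤ i ≤ 2m−1, Λ_{2m} = e',
Λ_{2m+1} = 0. -/
def HatBP (m e e' : ℕ) (L : ℕ → ℕ) : Prop :=
  (∀ i, 1 ≤ i → i ≤ 2 * m → L (i + 1) ≤ L i) ∧
  (∀ i, 1 ≤ i → i ≤ 2 * m - 1 → L (i + 2) + (e + e') ≤ L i) ∧
  L (2 * m) = e' ∧ L (2 * m + 1) = 0

namespace HatBPAux

def dseq (m c b : ℕ) (L : ℕ → ℕ) : ℕ → ℕ
  | 0 => b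
  | k + 1 =>
    if L (2*m - k) < L (2*m - k - 1) ∧
       dseq m c b L k + 1 + c + L (2*m - k + 1) ≤ L (2*m - k - 1) then 1 else 0

lemma dseq_le_one (m c b : ℕ) (L : ℕ → ℕ) (hb : b ≤ 1) : ∀ k, dseq m c b L k ≤ 1 := by
  intro k
  cases k with
  | zero => simpa [dseq] using hb
  | succ k => rw [dseq]; split <;> omega

lemma dseq_eq (m c b : ℕ) (L : ℕ → ℕ) (i : ℕ) (h1 : 1 ≤ i) (h2 : i + 1 ≤ 2*m) :
    dseq m c b L (2*m - i) =
      if L (i+1) < L i ∧ dseq m c b L (2*m - i - 1) + 1 + c + L (i+2) ≤ L i then 1 else 0 := by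
  have hk : 2*m - i = (2*m - i - 1) + 1 := by omega
  rw [hk, dseq]
  have e2 : 2*m - (2*m - i - 1) - 1 = i := by omega
  have e3 : 2*m - (2*m - i - 1) + 1 = i + 2 := by omega
  have e1 : 2*m - (2*m - i - 1) = i + 1 := by omega
  rw [e2, e3, e1, Nat.add_sub_cancel]

def Mseq (m c b : ℕ) (L : ℕ → ℕ) (i : ℕ) : ℕ :=
  ∑ j ∈ Finset.range (2*m + 1 - i), dseq m c b L j

lemma Mseq_top (m c b : ℕ) (L : ℕ → ℕ) : Mseq m c b L (2*m+1) = 0 := by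
  simp [Mseq]

lemma Mseq_2m (m c b : ℕ) (L : ℕ → ℕ) : Mseq m c b L (2*m) = b := by
  have h : 2*m + 1 - 2*m = 1 := by omega
  rw [Mseq, h, Finset.sum_range_one]
  rfl

lemma Mseq_step (m c b : ℕ) (L : ℕ → ℕ) (i : ℕ) (h : i ≤ 2*m) :
    Mseq m c b L i = Mseq m c b L (i+1) + dseq m c b L (2*m - i) := by
  have h1 : 2*m + 1 - i = (2*m - i) + 1 := by omega
  have h2 : 2*m + 1 - (i+1) = 2*m - i := by omega
  rw [Mseq, Mseq, h1, h2, Finset.sum_range_succ]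

lemma cover (m e e' a b c : ℕ) (L : ℕ → ℕ) (hm : 1 ≤ m)
    (hc : c + 1 = e + e') (hab : a + b = 1) (ha : a ≤ e) (hb : b ≤ e')
    (hmono : ∀ i, 1 ≤ i → i ≤ 2 * m → L (i + 1) ≤ L i)
    (hgap : ∀ i, 1 ≤ i → i ≤ 2 * m - 1 → L (i + 2) + (e + e') ≤ L i)
    (h2m : L (2 * m) = e') (htop : L (2 * m + 1) = 0) :
    ∀ i, 1 ≤ i → i + 1 ≤ 2*m →
      1 ≤ dseq m c b L (2*m - i) + dseq m c b L (2*m - i - 1) := by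
  have hb1 : b ≤ 1 := by omega
  intro i h1 h2
  by_cases hi : i + 1 = 2*m
  · -- i = 2m - 1
    have hd0 : 2*m - i - 1 = 0 := by omega
    rw [hd0]
    have hdb : dseq m c b L 0 = b := rfl
    rcases Nat.lt_or_ge b 1 with hb0 | hb1'
    · -- b = 0, so a = 1, e ≥ 1
      have hbz : b = 0 := by omega
      have hae : 1 ≤ e := by omega
      rw [dseq_eq m c b L i h1 h2, hd0, hdb]
      have hg := hgap i h1 (by omega)
      have hi1 : L (i+1) = e' := by rw [show i+1 = 2*m from hi]; exact h2m
      have hi2 : L (i+2) = 0 := by rw [show i+2 = 2*m+1 by omega]; exact htop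
      rw [if_pos (by omega)]
      omega
    · omega
  · -- i + 2 ≤ 2m
    by_contra hcon
    push_neg at hcon
    have hz1 : dseq m c b L (2*m - i) = 0 := by omega
    have hz2 : dseq m c b L (2*m - i - 1) = 0 := by omega
    have hg1 := hgap i h1 (by omega)
    have hg2 : L (i+3) + (e + e') ≤ L (i+1) := hgap (i+1) (by omega) (by omega)
    have hm1 := hmono i h1 (by omega)
    have hm2 : L (i+2) ≤ L (i+1) := hmono (i+1) (by omega) (by omega)
    have hm3 : L (i+3) ≤ L (i+2) := hmono (i+2) (by omega) (by omega)
    have hd3le := dseq_le_one m c b L hb1 (2*m - i - 2)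
    -- step 1 : L i = L (i+1)
    have heq1 : L i = L (i+1) := by
      rcases Nat.lt_or_ge (L (i+1)) (L i) with h | h
      · exfalso
        have : dseq m c b L (2*m - i) = 1 := by
          rw [dseq_eq m c b L i h1 h2, if_pos ⟨h, by omega⟩]
        omega
      · omega
    -- step 2 : analyze dseq at position i+1
    have hidx : 2*m - (i+1) = 2*m - i - 1 := by omega
    have hidx2 : 2*m - (i+1) - 1 = 2*m - i - 2 := by omega
    have hd2' : dseq m c b L (2*m - i - 1) =
        if L (i+2) < L (i+1) ∧ dseq m c b L (2*m - i - 2) + 1 + c + L (i+3) ≤ L (i+1)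
        then 1 else 0 := by
      rw [← hidx, ← hidx2, dseq_eq m c b L (i+1) (by omega) (by omega)]
    rcases Nat.lt_or_ge (L (i+2)) (L (i+1)) with hlt | hge
    · -- must have second condition failing
      have h2' : L (i+1) < dseq m c b L (2*m - i - 2) + 1 + c + L (i+3) := by
        rcases Nat.lt_or_ge (L (i+1)) (dseq m c b L (2*m - i - 2) + 1 + c + L (i+3)) with h | h
        · exact h
        · exfalso
          rw [hd2', if_pos ⟨hlt, h⟩] at hz2
          omega
      have heq23 : L (i+2) = L (i+3) := by omega
      have hd3 : dseq m c b L (2*m - i - 2) = 1 := by omega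
      by_cases hend : i + 2 = 2*m
      · have hzz : 2*m - i - 2 = 0 := by omega
        rw [hzz] at hd3
        have hbv : b = 1 := hd3
        have hL2 : L (i+2) = e' := by rw [show i+2 = 2*m from hend]; exact h2m
        have hL3 : L (i+3) = 0 := by rw [show i+3 = 2*m+1 by omega]; exact htop
        omega
      · have hidx3 : 2*m - (i+2) = 2*m - i - 2 := by omega
        have hidx4 : 2*m - (i+2) - 1 = 2*m - i - 3 := by omega
        have hd3' : dseq m c b L (2*m - i - 2) =
            if L (i+3) < L (i+2) ∧ dseq m c b L (2*m - i - 3) + 1 + c + L (i+4) ≤ L (i+2)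
            then 1 else 0 := by
          rw [← hidx3, ← hidx4, dseq_eq m c b L (i+2) (by omega) (by omega)]
        rw [hd3'] at hd3
        by_cases hcnd : L (i+3) < L (i+2) ∧
            dseq m c b L (2*m - i - 3) + 1 + c + L (i+4) ≤ L (i+2)
        · omega
        · rw [if_neg hcnd] at hd3; omega
    · -- L(i+1) ≤ L(i+2), so L i ≤ L (i+2), contradicting gap
      omega

lemma peel (m e e' a b : ℕ) (hm : 1 ≤ m) (hab : a + b = 1) (ha : a ≤ e) (hb : b ≤ e')
    (L : ℕ → ℕ) (hL : HatBP m e e' L) :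
    ∃ M L' : ℕ → ℕ, HatBP m a b M ∧ HatBP m (e - a) (e' - b) L' ∧
      ∀ i, 1 ≤ i → i ≤ 2*m + 1 → L i = M i + L' i := by
  obtain ⟨hmono, hgap, h2m, htop⟩ := hL
  have hc : (e + e' - 1) + 1 = e + e' := by omega
  set c := e + e' - 1 with hcdef
  have hb1 : b ≤ 1 := by omega
  have hcov := cover m e e' a b c L hm hc hab ha hb hmono hgap h2m htop
  -- step bound: drops of M bounded by drops of L
  have hstep : ∀ i, 1 ≤ i → i ≤ 2*m → L (i+1) + dseq m c b L (2*m - i) ≤ L i := by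
    intro i h1 h2
    by_cases hi : i + 1 ≤ 2*m
    · rw [dseq_eq m c b L i h1 hi]
      split
      · omega
      · have := hmono i h1 h2; omega
    · have hz : 2*m - i = 0 := by omega
      rw [hz]
      have hdb : dseq m c b L 0 = b := rfl
      have hL1 : L (i+1) = 0 := by rw [show i+1 = 2*m+1 by omega]; exact htop
      have hLi : L i = e' := by rw [show i = 2*m by omega]; exact h2m
      omega
  -- window bound
  have hP4 : ∀ i, 1 ≤ i → i + 1 ≤ 2*m →
      dseq m c b L (2*m - i) + dseq m c b L (2*m - i - 1) + c + L (i+2) ≤ L i := by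
    intro i h1 h2
    have hg := hgap i h1 (by omega)
    have hdle := dseq_le_one m c b L hb1 (2*m - i - 1)
    rw [dseq_eq m c b L i h1 h2]
    split
    · omega
    · omega
  have hMstep : ∀ i, i ≤ 2*m →
      Mseq m c b L i = Mseq m c b L (i+1) + dseq m c b L (2*m - i) :=
    fun i h => Mseq_step m c b L i h
  have hMstep2 : ∀ i, 1 ≤ i → i + 1 ≤ 2*m →
      Mseq m c b L i = Mseq m c b L (i+2) + dseq m c b L (2*m - i) + dseq m c b L (2*m - i - 1) := by
    intro i h1 h2
    have s1 := hMstep i (by omega)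
    have s2 := hMstep (i+1) (by omega)
    have hidx : 2*m - (i+1) = 2*m - i - 1 := by omega
    rw [hidx] at s2
    have : Mseq m c b L (i+1+1) = Mseq m c b L (i+2) := rfl
    omega
  -- M ≤ L
  have hMle : ∀ k i, 1 ≤ i → i + k = 2*m + 1 → Mseq m c b L i ≤ L i := by
    intro k
    induction k using Nat.strong_induction_on with
    | _ k ih =>
      intro i h1 hik
      rcases k with _ | _ | k
      · have hieq : i = 2*m+1 := by omega
        rw [hieq, Mseq_top]
        exact Nat.zero_le _
      · have hieq : i = 2*m := by omega
        rw [hieq, Mseq_2m, h2m]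
        exact hb
      · have h2 : i + 1 ≤ 2*m := by omega
        have e4 := hP4 i h1 h2
        have s := hMstep2 i h1 h2
        have ihh := ih k (by omega) (i+2) (by omega) (by omega)
        omega
  have hMle' : ∀ i, 1 ≤ i → i ≤ 2*m + 1 → Mseq m c b L i ≤ L i := by
    intro i h1 h2
    exact hMle (2*m + 1 - i) i h1 (by omega)
  refine ⟨Mseq m c b L, fun i => L i - Mseq m c b L i, ⟨?_, ?_, ?_, ?_⟩, ⟨?_, ?_, ?_, ?_⟩, ?_⟩
  · -- M monotone
    intro i h1 h2
    have := hMstep i (by omega)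
    omega
  · -- M gap
    intro i h1 h2
    have hcv := hcov i h1 (by omega)
    have := hMstep2 i h1 (by omega)
    omega
  · exact Mseq_2m m c b L
  · exact Mseq_top m c b L
  · -- L' monotone
    intro i h1 h2
    show L (i+1) - Mseq m c b L (i+1) ≤ L i - Mseq m c b L i
    have hs := hstep i h1 h2
    have hM1 := hMstep i (by omega)
    have hle1 := hMle' i h1 (by omega)
    have hle2 := hMle' (i+1) (by omega) (by omega)
    omega
  · -- L' gap
    intro i h1 h2
    show L (i+2) - Mseq m c b L (i+2) + (e - a + (e' - b)) ≤ L i - Mseq m c b L i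
    have e4 := hP4 i h1 (by omega)
    have s := hMstep2 i h1 (by omega)
    have hle1 := hMle' i h1 (by omega)
    have hle2 := hMle' (i+2) (by omega) (by omega)
    have hg := hgap i h1 h2
    omega
  · -- L' at 2m
    show L (2*m) - Mseq m c b L (2*m) = e' - b
    rw [Mseq_2m, h2m]
  · -- L' at 2m+1
    show L (2*m+1) - Mseq m c b L (2*m+1) = 0
    rw [Mseq_top, htop]
  · intro i h1 h2
    have := hMle' i h1 h2
    show L i = Mseq m c b L i + (L i - Mseq m c b L i)
    omega

end HatBPAux


theorem hatBP_decompose (m f f' : ℕ) (hm : 1 ≤ m)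
    (L : ℕ → ℕ) (hL : HatBP m f f' L) :
    ∃ (F : Fin f → ℕ → ℕ) (F' : Fin f' → ℕ → ℕ) (L0 : ℕ → ℕ),
      (∀ j, HatBP m 1 0 (F j)) ∧ (∀ j, HatBP m 0 1 (F' j)) ∧ HatBP m 0 0 L0 ∧
      ∀ i, 1 ≤ i → i ≤ 2 * m + 1 →
        L i = (∑ j, F j i) + (∑ j, F' j i) + L0 i := by
  induction f generalizing L with
  | zero =>
    induction f' generalizing L with
    | zero =>
      exact ⟨fun j => j.elim0, fun j => j.elim0, L, fun j => j.elim0, fun j => j.elim0, hL,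
        by intro i _ _; simp⟩
    | succ f' ih =>
      obtain ⟨M, L', hM, hL', heq⟩ :=
        HatBPAux.peel m 0 (f'+1) 0 1 hm rfl (le_refl 0) (by omega) L hL
      obtain ⟨F, F', L0, hF, hF', hL0, hsum⟩ := ih L' (by simpa using hL')
      refine ⟨F, Fin.cons M F', L0, hF, ?_, hL0, ?_⟩
      · intro j
        refine Fin.cases ?_ ?_ j
        · simpa using hM
        · intro j; simpa using hF' j
      · intro i h1 h2
        rw [heq i h1 h2, hsum i h1 h2]
        simp [Fin.sum_univ_succ]
        ring
  | succ f ih =>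
    obtain ⟨M, L', hM, hL', heq⟩ :=
      HatBPAux.peel m (f+1) f' 1 0 hm rfl (by omega) (Nat.zero_le _) L hL
    obtain ⟨F, F', L0, hF, hF', hL0, hsum⟩ := ih L' (by simpa using hL')
    refine ⟨Fin.cons M F, F', L0, ?_, hF', hL0, ?_⟩
    · intro j
      refine Fin.cases ?_ ?_ j
      · simpa using hM
      · intro j; simpa using hF j
    · intro i h1 h2
      rw [heq i h1 h2, hsum i h1 h2]
      simp [Fin.sum_univ_succ]
      ring
end

section
/- Fix (e, e') ∈ ℕ × ℕ, n ∈ ℕ, and m large enough that λ_{2m−1} = λ_{2m} = 0 for all λ ∈ BP^n_{e,e'}. The map κ' sending λ to Λ = (Λ₁, ..., Λ_{2m}) with Λ_{2k−1} = λ_{2k−1} + (m−k+1)e + (m−k)e' for 1 ≤ k ≤ m and Λ_{2k} = λ_{2k} + (m−k)(e+e') for 1 ≤ k ≤ m is an injection from BP^n_{e,e'} into the set of sequences Λ₁ ≥ Λ₂ ≥ ... ≥ Λ_{2m} of naturals with Λ_i − Λ_{i+2} ≥ e + e' for 1 ≤ i ≤ 2m − 2, Λ_{2m−1} = e, and Λ_{2m}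 = 0. -/
/-- The map κ' of 2.2: Λ_{2k−1} = λ_{2k−1} + (m−k+1)e + (m−k)e',
Λ_{2k} = λ_{2k} + (m−k)(e+e'). -/
def kappaMap' (e e' m : ℕ) (l : ℕ → ℕ) : ℕ → ℕ := fun i =>
  if i % 2 = 1 then l i + ((2 * m - i + 1) / 2) * e + ((2 * m - i) / 2) * e'
  else l i + ((2 * m - i) / 2) * (e + e')

theorem kappa'_injection (e e' n m : ℕ) (hm : 1 ≤ m)
    (hlarge : ∀ l : ℕ → ℕ, IsBipartition l → HasExcess l e e' → BSize l n →
      l (2 * m - 1) = 0 ∧ l (2 * m) = 0) :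
    (∀ l : ℕ → ℕ, IsBipartition l → HasExcess l e e' → BSize l n →
      (∀ i, 1 ≤ i → i ≤ 2 * m - 1 →
        kappaMap' e e' m l (i + 1) ≤ kappaMap' e e' m l i) ∧
      (∀ i, 1 ≤ i → i ≤ 2 * m - 2 →
        kappaMap' e e' m l (i + 2) + (e + e') ≤ kappaMap' e e' m l i) ∧
      kappaMap' e e' m l (2 * m - 1) = e ∧ kappaMap' e e' m l (2 * m) = 0) ∧
    (∀ l l' : ℕ → ℕ,
      IsBipartition l → HasExcess l e e' → BSize l n →
      IsBipartition l' → HasExcess l' e e' → BSize l' n →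
      (∀ i, 1 ≤ i → i ≤ 2 * m → kappaMap' e e' m l i = kappaMap' e e' m l' i) →
      l = l') := by
  constructor
  · intro l hbp hex hsz
    obtain ⟨h2m1, h2m⟩ := hlarge l hbp hex hsz
    refine ⟨?_, ?_, ?_, ?_⟩
    · -- monotone
      intro i hi1 hi2
      rcases Nat.even_or_odd i with ⟨k, hk⟩ | ⟨k, hk⟩
      · -- i even
        have h := (hex i hi1).2 ⟨k, hk⟩
        have hp1 : (i + 1) % 2 = 1 := by omega
        have hp2 : ¬ (i % 2 = 1) := by omega
        simp only [kappaMap', if_pos hp1, if_neg hp2]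
        have c1 : (2 * m - (i + 1) + 1) / 2 = (2 * m - (i + 1)) / 2 + 1 := by omega
        have c2 : (2 * m - i) / 2 = (2 * m - (i + 1)) / 2 + 1 := by omega
        rw [c1, c2, add_one_mul, add_one_mul, mul_add]
        linarith
      · -- i odd
        have h := (hex i hi1).1 ⟨k, hk⟩
        have hp1 : ¬ ((i + 1) % 2 = 1) := by omega
        have hp2 : i % 2 = 1 := by omega
        simp only [kappaMap', if_neg hp1, if_pos hp2]
        have c1 : (2 * m - i + 1) / 2 = (2 * m - (i + 1)) / 2 + 1 := by omega
        have c2 : (2 * m - i) / 2 = (2 * m - (i + 1)) / 2 := by omega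
        rw [c1, c2, add_one_mul, mul_add]
        linarith
    · -- gap
      intro i hi1 hi2
      have h := hbp.2.1 i hi1
      rcases Nat.even_or_odd i with ⟨k, hk⟩ | ⟨k, hk⟩
      · have hp1 : ¬ ((i + 2) % 2 = 1) := by omega
        have hp2 : ¬ (i % 2 = 1) := by omega
        simp only [kappaMap', if_neg hp1, if_neg hp2]
        have c2 : (2 * m - i) / 2 = (2 * m - (i + 2)) / 2 + 1 := by omega
        rw [c2, add_one_mul]
        linarith
      · have hp1 : (i + 2) % 2 = 1 := by omega
        have hp2 : i % 2 = 1 := by omega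
        simp only [kappaMap', if_pos hp1, if_pos hp2]
        have c1 : (2 * m - i + 1) / 2 = (2 * m - (i + 2) + 1) / 2 + 1 := by omega
        have c2 : (2 * m - i) / 2 = (2 * m - (i + 2)) / 2 + 1 := by omega
        rw [c1, c2, add_one_mul, add_one_mul]
        linarith
    · -- Λ_{2m−1} = e
      have hp : (2 * m - 1) % 2 = 1 := by omega
      simp only [kappaMap', if_pos hp]
      have c1 : (2 * m - (2 * m - 1) + 1) / 2 = 1 := by omega
      have c2 : (2 * m - (2 * m - 1)) / 2 = 0 := by omega
      rw [c1, c2, h2m1]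
      ring
    · -- Λ_{2m} = 0
      have hp : ¬ ((2 * m) % 2 = 1) := by omega
      simp only [kappaMap', if_neg hp]
      have c : (2 * m - 2 * m) / 2 = 0 := by omega
      rw [c, h2m]
      ring
  · -- injectivity
    intro l l' hbp hex hsz hbp' hex' hsz' hΛ
    obtain ⟨h1, h2⟩ := hlarge l hbp hex hsz
    obtain ⟨h1', h2'⟩ := hlarge l' hbp' hex' hsz'
    have vanish : ∀ (f : ℕ → ℕ), (∀ i, 1 ≤ i → f (i + 2) ≤ f i) →
        f (2 * m - 1) = 0 → f (2 * m) = 0 → ∀ j, 2 * m - 1 ≤ j → f j = 0 := by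
      intro f hmono hf1 hf2 j
      induction j using Nat.strong_induction_on with
      | _ j ih =>
        intro hj
        rcases Nat.lt_or_ge j (2 * m + 1) with hlt | hge
        · rcases (show j = 2 * m - 1 ∨ j = 2 * m by omega) with h | h
          · rw [h]; exact hf1
          · rw [h]; exact hf2
        · have hj2 : j - 2 + 2 = j := by omega
          have := hmono (j - 2) (by omega)
          rw [hj2] at this
          have hz := ih (j - 2) (by omega) (by omega)
          omega
    funext i
    rcases Nat.eq_zero_or_pos i with h0 | hpos
    · rw [h0, hbp.1, hbp'.1]
    rcases Nat.lt_or_ge (2 * m) i with hgt | hle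
    · rw [vanish l hbp.2.1 h1 h2 i (by omega),
        vanish l' hbp'.2.1 h1' h2' i (by omega)]
    · have h := hΛ i hpos hle
      simp only [kappaMap'] at h
      split_ifs at h
      · have := Nat.add_right_cancel h
        exact Nat.add_right_cancel this
      · exact Nat.add_right_cancel h
end

section
/- For every N ∈ ℕ with N ≥ 2 and every bipartition μ of total size (N−2)/2 (when N is even) and excess (4,0), there exist natural numbers k, k' with k + k' = (N−2)/2 and bipartitions μ' of size k and μ'' of size k', both of excess (2,0), such that μ = μ' + μ''. -/
theorem excess_four_zero_decompose_with_sizes (N : ℕ) (hN : 2 ≤ N) (hEven : Even N)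
    (μ : ℕ → ℕ) (hμ : IsBipartition μ) (hμe : HasExcess μ 4 0)
    (hμs : BSize μ ((N - 2) / 2)) :
    ∃ k k' : ℕ, k + k' = (N - 2) / 2 ∧
      ∃ μ' μ'' : ℕ → ℕ,
        IsBipartition μ' ∧ HasExcess μ' 2 0 ∧ BSize μ' k ∧
        IsBipartition μ'' ∧ HasExcess μ'' 2 0 ∧ BSize μ'' k' ∧
        ∀ i, μ i = μ' i + μ'' i := by
  obtain ⟨hμ0, hμmono, M0, hM0⟩ := hμ
  obtain ⟨M, hMz, hMs⟩ := hμs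
  refine ⟨∑ i ∈ Finset.range M, (μ i + 1) / 2, ∑ i ∈ Finset.range M, μ i / 2, ?_,
    fun i => (μ i + 1) / 2, fun i => μ i / 2, ?_, ?_, ?_, ?_, ?_, ?_, ?_⟩
  · rw [← Finset.sum_add_distrib, ← hMs]
    exact Finset.sum_congr rfl fun i _ => by omega
  · exact ⟨by simp [hμ0], fun i hi => by simp only []; have := hμmono i hi; omega,
      ⟨M, fun i hi => by simp only []; have := hMz i hi; omega⟩⟩
  · intro i hi
    have h1 := (hμe i hi).1
    have h2 := (hμe i hi).2
    rcases Nat.even_or_odd i with h | h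
    · exact ⟨fun ho => absurd ho (Nat.not_odd_iff_even.mpr h),
        fun _ => by simp only []; have := h2 h; omega⟩
    · exact ⟨fun _ => by simp only []; have := h1 h; omega,
        fun he => absurd he (Nat.not_even_iff_odd.mpr h)⟩
  · exact ⟨M, fun i hi => by simp only []; have := hMz i hi; omega, rfl⟩
  · exact ⟨by simp [hμ0], fun i hi => by simp only []; have := hμmono i hi; omega,
      ⟨M, fun i hi => by simp only []; have := hMz i hi; omega⟩⟩
  · intro i hi
    have h1 := (hμe i hi).1
    have h2 := (hμe i hi).2
    rcases Nat.even_or_odd i with h | h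
    · exact ⟨fun ho => absurd ho (Nat.not_odd_iff_even.mpr h),
        fun _ => by simp only []; have := h2 h; omega⟩
    · exact ⟨fun _ => by simp only []; have := h1 h; omega,
        fun he => absurd he (Nat.not_even_iff_odd.mpr h)⟩
  · exact ⟨M, fun i hi => by simp only []; have := hMz i hi; omega, rfl⟩
  · intro i; simp only []; omega
end
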